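/- arXiv:1110.0230 — 2 statements merged into one kernel-verified Lean document; each statement's English description precedes it below -/
import Mathlib

section
/- Let κ be an algebraically closed field of characteristic p. Then the additive map W(κ) → W(κ) on Witt vectors given by x ↦ x - σ(x), where σ is the Frobenius of W(κ), is surjective. -/
open Function Polynomial

namespace StmtAux

variable (p : ℕ) [hp : Fact p.Prime]

local notation "𝕎" => WittVector p

section CommRing
variable {R : Type*} [CommRing R]

lemma iterate_verschiebung_coeff_lt (v : 𝕎 R) {n i : ℕ} (h : i < n) :
    (WittVector.verschiebung^[n] v).coeff i = 0 := by
  induction n generalizing i with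
  | zero => omega
  | succ n ih =>
    rw [Function.iterate_succ_apply']
    match i with
    | 0 => exact WittVector.verschiebung_coeff_zero _
    | Nat.succ i => rw [WittVector.verschiebung_coeff_succ]; exact ih (by omega)

lemma truncate_eq_of_coeff_eq (a b : 𝕎 R) (m : ℕ) (h : ∀ j < m, a.coeff j = b.coeff j) :
    WittVector.truncate (p := p) m a = WittVector.truncate m b := by
  ext j
  rw [WittVector.coeff_truncate, WittVector.coeff_truncate]
  exact h j j.2

lemma add_iterate_verschiebung_coeff_lt (u v : 𝕎 R) {n i : ℕ} (h : i < n) :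
    (u + WittVector.verschiebung^[n] v).coeff i = u.coeff i := by
  have h0 : WittVector.truncate (p := p) n (WittVector.verschiebung^[n] v) = 0 := by
    ext j
    rw [WittVector.coeff_truncate, TruncatedWittVector.coeff_zero]
    exact iterate_verschiebung_coeff_lt p v j.2
  have h1 : WittVector.truncate (p := p) n (u + WittVector.verschiebung^[n] v)
      = WittVector.truncate n u := by rw [map_add, h0, add_zero]
  have := congrArg (fun z => z.coeff ⟨i, h⟩) h1
  simpa only [WittVector.coeff_truncate] using this

lemma ghost_iterate_verschiebung (v : 𝕎 R) (k n : ℕ) :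
    WittVector.ghostComponent (k + n) (WittVector.verschiebung^[n] v)
      = (p : R) ^ n * WittVector.ghostComponent k v := by
  induction n with
  | zero => simp
  | succ n ih =>
    rw [Function.iterate_succ_apply', show k + (n + 1) = (k + n) + 1 by omega,
      WittVector.ghostComponent_verschiebung, ih, pow_succ]
    ring

lemma map_iterate_verschiebung {S : Type*} [CommRing S] (g : R →+* S) (x : 𝕎 R) (n : ℕ) :
    WittVector.map g (WittVector.verschiebung^[n] x)
      = WittVector.verschiebung^[n] (WittVector.map g x) := by
  induction n with
  | zero => rfl
  | succ n ih =>
    rw [Function.iterate_succ_apply', Function.iterate_succ_apply',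
      WittVector.map_verschiebung, ih]

lemma coeff_add_iterate_verschiebung_of_invertible [Invertible (p : R)]
    (u v : 𝕎 R) (n : ℕ) :
    (u + WittVector.verschiebung^[n] v).coeff n = u.coeff n + v.coeff 0 := by
  have hg : WittVector.ghostComponent n (u + WittVector.verschiebung^[n] v)
      = WittVector.ghostComponent n u + (p : R) ^ n * v.coeff 0 := by
    rw [map_add]
    congr 1
    have h := ghost_iterate_verschiebung p v 0 n
    rw [zero_add] at h
    rw [h]
    congr 1
    rw [WittVector.ghostComponent_apply, aeval_wittPolynomial]
    simp
  rw [WittVector.ghostComponent_apply, aeval_wittPolynomial,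
    WittVector.ghostComponent_apply, aeval_wittPolynomial,
    Finset.sum_range_succ, Finset.sum_range_succ] at hg
  rw [Finset.sum_congr rfl (fun i hi => by
    rw [add_iterate_verschiebung_coeff_lt p u v (Finset.mem_range.mp hi)])] at hg
  rw [add_assoc] at hg
  have hg2 := add_left_cancel hg
  rw [Nat.sub_self, pow_zero, pow_one, pow_one, ← mul_add] at hg2
  letI : Invertible ((p : R) ^ n) := invertiblePow _ _
  have := congrArg (fun t => ⅟((p : R) ^ n) * t) hg2
  simpa only [invOf_mul_cancel_left] using this

lemma coeff_add_iterate_verschiebung (u v : 𝕎 R) (n : ℕ) :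
    (u + WittVector.verschiebung^[n] v).coeff n = u.coeff n + v.coeff 0 := by
  let f : MvPolynomial (ℕ ⊕ ℕ) ℤ →+* R :=
    MvPolynomial.eval₂Hom (Int.castRingHom R) (Sum.elim u.coeff v.coeff)
  let U : 𝕎 (MvPolynomial (ℕ ⊕ ℕ) ℤ) := WittVector.mk p fun i => MvPolynomial.X (Sum.inl i)
  let V : 𝕎 (MvPolynomial (ℕ ⊕ ℕ) ℤ) := WittVector.mk p fun i => MvPolynomial.X (Sum.inr i)
  have hU : WittVector.map f U = u := by
    ext i; simp [WittVector.map_coeff, WittVector.coeff_mk, U, f]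
  have hV : WittVector.map f V = v := by
    ext i; simp [WittVector.map_coeff, WittVector.coeff_mk, V, f]
  have key : (U + WittVector.verschiebung^[n] V).coeff n = U.coeff n + V.coeff 0 := by
    apply MvPolynomial.map_injective (Int.castRingHom ℚ) Int.cast_injective
    letI : Invertible (p : ℚ) :=
      invertibleOfNonzero (by exact_mod_cast hp.out.ne_zero)
    set g := MvPolynomial.map (σ := ℕ ⊕ ℕ) (Int.castRingHom ℚ)
    have h2 := coeff_add_iterate_verschiebung_of_invertible p
      (WittVector.map g U) (WittVector.map g V) n
    rw [← map_iterate_verschiebung, ← map_add, WittVector.map_coeff,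
      WittVector.map_coeff, WittVector.map_coeff] at h2
    rw [h2, map_add]
  have := congrArg f key
  rw [map_add] at this
  calc (u + WittVector.verschiebung^[n] v).coeff n
      = (WittVector.map f (U + WittVector.verschiebung^[n] V)).coeff n := by
        rw [map_add, map_iterate_verschiebung, hU, hV]
    _ = f ((U + WittVector.verschiebung^[n] V).coeff n) := WittVector.map_coeff f _ n
    _ = f (U.coeff n) + f (V.coeff 0) := this
    _ = u.coeff n + v.coeff 0 := by
        rw [← WittVector.map_coeff, ← WittVector.map_coeff, hU, hV]

lemma sub_coeff_zero (a b : 𝕎 R) : (a - b).coeff 0 = a.coeff 0 - b.coeff 0 := by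
  have h := WittVector.add_coeff_zero (p := p) (a - b) b
  rw [sub_add_cancel] at h
  exact eq_sub_of_add_eq h.symm

lemma iterate_verschiebung_sub (a b : 𝕎 R) (n : ℕ) :
    WittVector.verschiebung^[n] (a - b)
      = WittVector.verschiebung^[n] a - WittVector.verschiebung^[n] b := by
  induction n with
  | zero => rfl
  | succ n ih =>
    rw [Function.iterate_succ_apply', ih, Function.iterate_succ_apply',
      Function.iterate_succ_apply']
    exact map_sub WittVector.verschiebung _ _

end CommRing

section CharP

variable {K : Type*} [CommRing K] [CharP K p]

lemma L_add_iterate (a w : 𝕎 K) (n : ℕ) :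
    (a + WittVector.verschiebung^[n] w)
        - WittVector.frobenius (a + WittVector.verschiebung^[n] w)
      = (a - WittVector.frobenius a)
        + WittVector.verschiebung^[n] (w - WittVector.frobenius w) := by
  rw [map_add, iterate_verschiebung_sub]
  have hc : WittVector.frobenius (WittVector.verschiebung^[n] w)
      = WittVector.verschiebung^[n] (WittVector.frobenius w) :=
    ((WittVector.verschiebung_frobenius_comm (p := p) (R := K)).iterate_left n w).symm
  rw [hc]
  ring

lemma L_coeff_congr (a b : 𝕎 K) (m i : ℕ) (h : ∀ j < m, a.coeff j = b.coeff j) (hi : i < m) :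
    (a - WittVector.frobenius a).coeff i = (b - WittVector.frobenius b).coeff i := by
  have ht : WittVector.truncate (p := p) m a = WittVector.truncate m b :=
    truncate_eq_of_coeff_eq p a b m h
  have hf : WittVector.truncate (p := p) m (WittVector.frobenius a)
      = WittVector.truncate m (WittVector.frobenius b) := by
    apply truncate_eq_of_coeff_eq
    intro j hj
    rw [WittVector.coeff_frobenius_charP, WittVector.coeff_frobenius_charP, h j hj]
  have h1 : WittVector.truncate (p := p) m (a - WittVector.frobenius a)
      = WittVector.truncate m (b - WittVector.frobenius b) := by
    rw [map_sub, map_sub, ht, hf]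
  have := congrArg (fun z => z.coeff ⟨i, hi⟩) h1
  simpa only [WittVector.coeff_truncate] using this

end CharP


section Field
variable {κ : Type*} [Field κ] [IsAlgClosed κ]

lemma exists_z (c : κ) : ∃ z : κ, z - z ^ p = c := by
  have hd1 : ((X : κ[X]) ^ p - X).degree = (p : WithBot ℕ) := by
    rw [Polynomial.degree_sub_eq_left_of_degree_lt]
    · exact Polynomial.degree_X_pow p
    · rw [Polynomial.degree_X_pow, Polynomial.degree_X]
      exact_mod_cast hp.out.one_lt
  have hd : ((X : κ[X]) ^ p - X + Polynomial.C c).degree = (p : WithBot ℕ) := by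
    rw [Polynomial.degree_add_eq_left_of_degree_lt, hd1]
    rw [hd1]
    exact lt_of_le_of_lt Polynomial.degree_C_le (by exact_mod_cast hp.out.pos)
  obtain ⟨z, hz⟩ := IsAlgClosed.exists_root ((X : κ[X]) ^ p - X + Polynomial.C c)
    (by rw [hd]; exact_mod_cast hp.out.ne_zero)
  refine ⟨z, ?_⟩
  have h : z ^ p - z + c = 0 := by simpa [Polynomial.IsRoot] using hz
  linear_combination -h

end Field

end StmtAux

open StmtAux in
/-- Let κ be an algebraically closed field of characteristic p. Then the additive map
`W(κ) → W(κ)` on Witt vectors given by `x ↦ x - σ(x)`, where `σ` is the Frobenius of `W(κ)`,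
is surjective. -/
theorem stmt_0 (p : ℕ) [hp : Fact p.Prime] (κ : Type*) [Field κ] [IsAlgClosed κ] [CharP κ p] :
    Function.Surjective (fun x : WittVector p κ => x - WittVector.frobenius x) := by
  intro y
  have key : ∀ (n : ℕ) (a : WittVector p κ), ∃ b : WittVector p κ,
      (∀ i < n, b.coeff i = a.coeff i) ∧
      (∀ i < n, (b - WittVector.frobenius b).coeff i
        = (a - WittVector.frobenius a).coeff i) ∧
      (b - WittVector.frobenius b).coeff n = y.coeff n := by
    intro n a
    obtain ⟨z, hz⟩ := exists_z p (y.coeff n - (a - WittVector.frobenius a).coeff n)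
    refine ⟨a + WittVector.verschiebung^[n] (WittVector.teichmuller p z), ?_, ?_, ?_⟩
    · intro i hi
      exact add_iterate_verschiebung_coeff_lt p _ _ hi
    · intro i hi
      rw [L_add_iterate, add_iterate_verschiebung_coeff_lt p _ _ hi]
    · rw [L_add_iterate, coeff_add_iterate_verschiebung, sub_coeff_zero,
        WittVector.coeff_frobenius_charP, WittVector.teichmuller_coeff_zero, hz]
      ring
  choose g hg1 hg2 hg3 using key
  set s : ℕ → WittVector p κ := fun n => Nat.rec (g 0 0) (fun n a => g (n + 1) a) n with hs
  have hs0 : s 0 = g 0 0 := rfl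
  have hsS : ∀ n, s (n + 1) = g (n + 1) (s n) := fun n => rfl
  have hsol : ∀ n, ∀ i ≤ n, (s n - WittVector.frobenius (s n)).coeff i = y.coeff i := by
    intro n
    induction n with
    | zero =>
      intro i hi
      interval_cases i
      exact hg3 0 0
    | succ n ih =>
      intro i hi
      rcases Nat.lt_or_ge i (n + 1) with h | h
      · rw [hsS, hg2 (n + 1) (s n) i h]
        exact ih i (by omega)
      · have : i = n + 1 := by omega
        subst this
        rw [hsS]
        exact hg3 (n + 1) (s n)
  have stab : ∀ n m, n ≤ m → ∀ i ≤ n, (s m).coeff i = (s n).coeff i := by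
    intro n m hnm
    induction m, hnm using Nat.le_induction with
    | base => exact fun _ _ => rfl
    | succ m hm ih =>
      intro i hi
      rw [hsS, hg1 (m + 1) (s m) i (by omega), ih i hi]
  refine ⟨WittVector.mk p (fun i => (s i).coeff i), ?_⟩
  ext n
  show ((WittVector.mk p fun i => (s i).coeff i)
      - WittVector.frobenius (WittVector.mk p fun i => (s i).coeff i)).coeff n = y.coeff n
  rw [L_coeff_congr p (WittVector.mk p fun i => (s i).coeff i) (s n) (n + 1) n
    (fun j hj => by rw [WittVector.coeff_mk]; exact (stab j n (by omega) j le_rfl).symm) (by omega)]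
  exact hsol n n le_rfl
end

section
/- Let A be an inverse system (M_m)_{m≥1} of finite abelian groups with M_m a Z/ℓ^m Z-module, satisfying the Mittag-Leffler condition. If each transition map M_{m+1} → M_m induces an isomorphism M_{m+1}/ℓ^m ≅ M_m for m large, then M = lim M_m is a finitely generated Z_ℓ-module and M/ℓ^m ≅ M_m for m large. -/
/-- Iterated transition maps of an inverse system indexed by ℕ. -/
def chainMap {M : ℕ → Type*} [∀ m, AddCommGroup (M m)]
    (t : ∀ m, M (m + 1) →+ M m) : ∀ (m k : ℕ), M (m + k) →+ M m
  | _, 0 => AddMonoidHom.id _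
  | m, (k + 1) => (chainMap t m k).comp (t (m + k))

/-- The inverse limit of an inverse system of abelian groups, as a subgroup of the product. -/
def invLimit {M : ℕ → Type*} [∀ m, AddCommGroup (M m)] (t : ∀ m, M (m + 1) →+ M m) :
    AddSubgroup (∀ m, M m) where
  carrier := {x | ∀ m, t m (x (m + 1)) = x m}
  add_mem' := by
    intro a b ha hb m
    simp [map_add, ha m, hb m]
  zero_mem' := by
    intro m
    simp
  neg_mem' := by
    intro a ha m
    simp [map_neg, ha m]

/-- A ℤ_ℓ-module structure compatible with the ℤ-module structure, which is finitely
generated. -/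
def IsFinZlModule (ℓ : ℕ) [Fact ℓ.Prime] (L : Type*) [AddCommGroup L]
    [Module ℤ_[ℓ] L] : Prop :=
  (∀ (n : ℤ) (x : L), ((n : ℤ_[ℓ]) • x) = n • x) ∧ Module.Finite ℤ_[ℓ] L

namespace Stmt10Aux

open CategoryTheory

variable {M : ℕ → Type*} [∀ m, AddCommGroup (M m)]

def eqCast (M : ℕ → Type*) [∀ m, AddCommGroup (M m)] {a b : ℕ} (h : a = b) : M a →+ M b :=
  h ▸ AddMonoidHom.id (M a)

@[simp] lemma eqCast_rfl {a : ℕ} (h : a = a) (x : M a) : eqCast M h x = x := by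
  cases h; rfl

lemma eqCast_eqCast {a b c : ℕ} (h : a = b) (h' : b = c) (x : M a) :
    eqCast M h' (eqCast M h x) = eqCast M (h.trans h') x := by
  subst h; subst h'; rfl

lemma eqCast_t (t : ∀ m, M (m + 1) →+ M m) {a b : ℕ} (h : a = b) (x : M (a + 1)) :
    t b (eqCast M (by rw [h]) x) = eqCast M h (t a x) := by
  subst h; simp

lemma chain_surj (t : ∀ m, M (m + 1) →+ M m) (m : ℕ)
    (hs : ∀ i, m ≤ i → Function.Surjective (t i)) :
    ∀ j, Function.Surjective (chainMap t m j) := by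
  intro j
  induction j with
  | zero => exact fun b => ⟨b, rfl⟩
  | succ j ih =>
      exact Function.Surjective.comp (g := chainMap t m j) ih (hs (m + j) (Nat.le_add_right _ _))

/-- Sections through an inverse system of nonempty subsets. -/
lemma exists_section [∀ m, Finite (M m)] (t : ∀ m, M (m + 1) →+ M m)
    (S : ∀ k, Set (M k)) (hne : ∀ k, (S k).Nonempty)
    (hmap : ∀ k x, x ∈ S (k + 1) → t k x ∈ S k) :
    ∃ x : invLimit t, ∀ k, (x : ∀ n, M n) k ∈ S k := by
  let f : ∀ n, (S (n + 1) : Type _) → (S n : Type _) := fun n x => ⟨t n x.1, hmap n _ x.2⟩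
  let F : ℕᵒᵖ ⥤ Type _ := Functor.ofOpSequence (C := Type _) (X := fun n => (S n : Type _)) (f := fun n => TypeCat.ofHom (f n))
  haveI : ∀ j : ℕᵒᵖ, Finite (F.obj j) := by
    intro j; exact Subtype.finite
  haveI : ∀ j : ℕᵒᵖ, Nonempty (F.obj j) := by
    intro j; exact Set.Nonempty.to_subtype (hne j.unop)
  obtain ⟨s, hs⟩ := nonempty_sections_of_finite_inverse_system F
  have hstep : ∀ k : ℕ, f k (s (Opposite.op (k + 1))) = s (Opposite.op k) := by
    intro k
    have := hs (j := Opposite.op (k + 1)) (j' := Opposite.op k)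
      (homOfLE (Nat.le_add_right k 1)).op
    rwa [Functor.ofOpSequence_map_homOfLE_succ] at this
  refine ⟨⟨fun k => (s (Opposite.op k)).1, ?_⟩, fun k => (s (Opposite.op k)).2⟩
  intro m
  exact congrArg Subtype.val (hstep m)

end Stmt10Aux

section
open Stmt10Aux
variable {M : ℕ → Type*} [∀ m, AddCommGroup (M m)]

/-- Surjectivity of the projection from the inverse limit. -/
lemma Stmt10Aux.proj_surj [∀ m, Finite (M m)] (t : ∀ m, M (m + 1) →+ M m) (m : ℕ)
    (hs : ∀ i, m ≤ i → Function.Surjective (t i)) :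
    Function.Surjective (fun x : invLimit t => (x : ∀ n, M n) m) := by
  intro b
  set S : ∀ k, Set (M k) :=
    fun k => {u : M k | ∀ j (h : k = m + j), chainMap t m j (eqCast M h u) = b} with hS
  have hne : ∀ k, (S k).Nonempty := by
    intro k
    rcases Nat.lt_or_ge k m with hk | hk
    · exact ⟨0, fun j h => absurd h (by omega)⟩
    · obtain ⟨w, hw⟩ := chain_surj t m (fun i hi => hs i hi) (k - m) b
      refine ⟨eqCast M (show m + (k - m) = k by omega) w, ?_⟩
      intro j h
      have hj : j = k - m := by omega
      subst hj
      rw [eqCast_eqCast, eqCast_rfl, hw]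
  have hmap : ∀ k x, x ∈ S (k + 1) → t k x ∈ S k := by
    intro k x hx j h
    have h1 : k + 1 = m + (j + 1) := by omega
    have := hx (j + 1) h1
    rw [show chainMap t m (j + 1) = (chainMap t m j).comp (t (m + j)) from rfl] at this
    rw [← this]
    simp only [AddMonoidHom.comp_apply]
    congr 1
    exact (eqCast_t t h x).symm
  obtain ⟨x, hx⟩ := exists_section t S hne hmap
  refine ⟨x, ?_⟩
  have := hx m 0 (by omega)
  simpa [chainMap] using this

lemma Stmt10Aux.below_zero (t : ∀ m, M (m + 1) →+ M m) (x : invLimit t) (m : ℕ)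
    (hx : (x : ∀ n, M n) m = 0) : ∀ k, k ≤ m → (x : ∀ n, M n) k = 0 := by
  have key : ∀ d, (x : ∀ n, M n) (m - d) = 0 := by
    intro d
    induction d with
    | zero => simpa using hx
    | succ d ih =>
        rcases Nat.lt_or_ge d m with hd | hd
        · have h : m - (d + 1) + 1 = m - d := by omega
          rw [← h] at ih
          rw [← x.2 (m - (d + 1)), ih, map_zero]
        · have h : m - (d + 1) = m - d := by omega
          rw [h]; exact ih
  intro k hk
  have h : k = m - (m - k) := by omega
  rw [h]; exact key (m - k)

lemma Stmt10Aux.above_dvd {ℓ : ℕ} (htor : ∀ (m : ℕ) (x : M m), (ℓ ^ m) • x = 0)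
    (t : ∀ m, M (m + 1) →+ M m) (N : ℕ)
    (hiso : ∀ i, N ≤ i → Function.Surjective (t i) ∧
      ∀ x : M (i + 1), t i x = 0 ↔ ∃ y : M (i + 1), (ℓ ^ i) • y = x)
    (m : ℕ) (hNm : N ≤ m) (x : invLimit t) (hx : (x : ∀ n, M n) m = 0) :
    ∀ k, m < k → ∃ y : M k, (ℓ ^ m) • y = (x : ∀ n, M n) k := by
  intro k
  induction k with
  | zero => omega
  | succ k ih =>
      intro hk
      rcases Nat.lt_or_ge m k with hmk | hmk
      · obtain ⟨y, hy⟩ := ih hmk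
        obtain ⟨w, hw⟩ := (hiso k (by omega)).1 y
        have hker : t k ((x : ∀ n, M n) (k + 1) - (ℓ ^ m) • w) = 0 := by
          rw [map_sub, map_nsmul, hw, x.2 k, hy, sub_self]
        obtain ⟨z, hz⟩ := ((hiso k (by omega)).2 _).mp hker
        refine ⟨w + (ℓ ^ (k - m)) • z, ?_⟩
        rw [smul_add, smul_smul, ← pow_add, show m + (k - m) = k by omega, hz]
        abel
      · have hmk' : m = k := by omega
        subst hmk'
        have hker : t m ((x : ∀ n, M n) (m + 1)) = 0 := by rw [x.2 m, hx]
        obtain ⟨y, hy⟩ := ((hiso m hNm).2 _).mp hker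
        exact ⟨y, hy⟩

/-- Solving `ℓ^m • y = x` in the limit when `x` vanishes at level `m ≥ N`. -/
lemma Stmt10Aux.dvd_of_proj_zero {ℓ : ℕ} [∀ m, Finite (M m)]
    (htor : ∀ (m : ℕ) (x : M m), (ℓ ^ m) • x = 0)
    (t : ∀ m, M (m + 1) →+ M m) (N : ℕ)
    (hiso : ∀ i, N ≤ i → Function.Surjective (t i) ∧
      ∀ x : M (i + 1), t i x = 0 ↔ ∃ y : M (i + 1), (ℓ ^ i) • y = x)
    (m : ℕ) (hNm : N ≤ m) (x : invLimit t) (hx : (x : ∀ n, M n) m = 0) :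
    ∃ y : invLimit t, (ℓ ^ m) • y = x := by
  set S : ∀ k, Set (M k) := fun k => {u : M k | (ℓ ^ m) • u = (x : ∀ n, M n) k} with hS
  have hne : ∀ k, (S k).Nonempty := by
    intro k
    rcases Nat.lt_or_ge m k with hk | hk
    · exact above_dvd htor t N hiso m hNm x hx k hk
    · exact ⟨0, by simp [hS, below_zero t x m hx k hk]⟩
  have hmap : ∀ k u, u ∈ S (k + 1) → t k u ∈ S k := by
    intro k u hu
    simp only [hS, Set.mem_setOf_eq] at hu ⊢
    rw [← map_nsmul, hu, x.2 k]
  obtain ⟨y, hy⟩ := exists_section t S hne hmap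
  refine ⟨y, ?_⟩
  ext k
  have := hy k
  simpa [hS] using this

end

section
open Stmt10Aux
variable {M : ℕ → Type*} [∀ m, AddCommGroup (M m)] {ℓ : ℕ} [Fact ℓ.Prime]

lemma Stmt10Aux.zsmul_congr (htor : ∀ (m : ℕ) (x : M m), (ℓ ^ m) • x = 0)
    (m : ℕ) (x : M m) {a b : ℤ} (h : ((ℓ : ℤ) ^ m) ∣ a - b) : a • x = b • x := by
  obtain ⟨c, hc⟩ := h
  have ha : a = b + c * (ℓ : ℤ) ^ m := by linarith
  rw [ha, add_zsmul, mul_zsmul]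
  have : ((ℓ : ℤ) ^ m) • x = 0 := by
    rw [show ((ℓ : ℤ) ^ m) = ((ℓ ^ m : ℕ) : ℤ) by push_cast; ring, natCast_zsmul, htor]
  rw [this, smul_zero, add_zero]

lemma Stmt10Aux.smul_eq_smul (htor : ∀ (m : ℕ) (x : M m), (ℓ ^ m) • x = 0)
    (m : ℕ) (x : M m) {a : ℤ_[ℓ]} {u v : ℤ}
    (hu : ((ℓ : ℤ_[ℓ]) ^ m) ∣ a - (u : ℤ_[ℓ])) (hv : ((ℓ : ℤ_[ℓ]) ^ m) ∣ a - (v : ℤ_[ℓ])) :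
    u • x = v • x := by
  apply zsmul_congr htor
  have : ((ℓ : ℤ_[ℓ]) ^ m) ∣ ((u - v : ℤ) : ℤ_[ℓ]) := by
    push_cast
    have := dvd_sub hv hu
    simpa using this
  exact (PadicInt.pow_p_dvd_int_iff m _).mp this

lemma Stmt10Aux.appr_sub_dvd (a : ℤ_[ℓ]) (m : ℕ) :
    ((ℓ : ℤ_[ℓ]) ^ m) ∣ a - ((a.appr m : ℤ) : ℤ_[ℓ]) := by
  have := PadicInt.appr_spec m a
  rw [Ideal.mem_span_singleton] at this
  simpa using this

/-- The key congruence: at level `m`, `a • x` may be computed with `a.appr n` for any `n ≥ m`. -/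
lemma Stmt10Aux.appr_smul_congr (htor : ∀ (m : ℕ) (x : M m), (ℓ ^ m) • x = 0)
    (m n : ℕ) (hmn : m ≤ n) (a : ℤ_[ℓ]) (x : M m) :
    (a.appr n) • x = (a.appr m) • x := by
  rw [← natCast_zsmul x (a.appr n), ← natCast_zsmul x (a.appr m)]
  exact smul_eq_smul htor m x
    (dvd_trans (pow_dvd_pow _ hmn) (appr_sub_dvd a n)) (appr_sub_dvd a m)

variable (htor : ∀ (m : ℕ) (x : M m), (ℓ ^ m) • x = 0) (t : ∀ m, M (m + 1) →+ M m)

noncomputable def Stmt10Aux.pSmul (a : ℤ_[ℓ]) (x : invLimit t) : invLimit t :=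
  ⟨fun m => (a.appr m) • (x : ∀ n, M n) m, by
    intro m
    rw [map_nsmul, x.2 m]
    exact appr_smul_congr htor m (m + 1) (Nat.le_succ m) a _⟩

lemma Stmt10Aux.pSmul_coe (a : ℤ_[ℓ]) (x : invLimit t) (m : ℕ) :
    ((pSmul htor t a x : invLimit t) : ∀ n, M n) m = (a.appr m) • (x : ∀ n, M n) m := rfl

/-- `a • x` agrees with `n • x` whenever `n : ℤ` is close to `a`. -/
lemma Stmt10Aux.pSmul_eq_zsmul_comp (a : ℤ_[ℓ]) (n : ℤ) (h : a = (n : ℤ_[ℓ]))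
    (x : invLimit t) : pSmul htor t a x = n • x := by
  ext m
  rw [pSmul_coe, show (((n • x : invLimit t) : ∀ k, M k) m) = n • ((x : ∀ k, M k) m) by
    simp]
  rw [← natCast_zsmul ((x : ∀ k, M k) m) ((a.appr m))]
  exact smul_eq_smul htor m _ (appr_sub_dvd a m) (by rw [h, sub_self]; exact dvd_zero _)

noncomputable def Stmt10Aux.pModule : Module ℤ_[ℓ] (invLimit t) where
  smul := pSmul htor t
  one_smul x := by
    have := pSmul_eq_zsmul_comp htor t (1 : ℤ_[ℓ]) 1 (by norm_num) x
    simp only [one_zsmul] at this; exact this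
  mul_smul a b x := by
    show pSmul htor t (a * b) x = pSmul htor t a (pSmul htor t b x)
    ext m
    simp only [pSmul_coe]
    rw [smul_smul, ← natCast_zsmul _ ((a * b).appr m), ← natCast_zsmul _ (a.appr m * b.appr m)]
    apply smul_eq_smul htor m _ (appr_sub_dvd _ m)
    · push_cast
      have h1 := appr_sub_dvd (ℓ := ℓ) a m
      have h2 := appr_sub_dvd (ℓ := ℓ) b m
      have : a * b - (a.appr m : ℤ_[ℓ]) * (b.appr m : ℤ_[ℓ])
          = a * (b - (b.appr m : ℤ_[ℓ])) + (b.appr m : ℤ_[ℓ]) * (a - (a.appr m : ℤ_[ℓ])) := by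
        ring
      rw [this]
      exact dvd_add (Dvd.dvd.mul_left h2 a) (Dvd.dvd.mul_left h1 _)
  smul_zero a := by
    show pSmul htor t a 0 = 0
    ext m
    simp [pSmul_coe]
  smul_add a x y := by
    show pSmul htor t a (x + y) = pSmul htor t a x + pSmul htor t a y
    ext m
    simp [pSmul_coe, smul_add]
  add_smul a b x := by
    show pSmul htor t (a + b) x = pSmul htor t a x + pSmul htor t b x
    ext m
    simp only [pSmul_coe, AddSubgroup.coe_add, Pi.add_apply]
    rw [← natCast_zsmul _ ((a + b).appr m), ← natCast_zsmul _ (a.appr m),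
      ← natCast_zsmul _ (b.appr m), ← add_zsmul]
    apply smul_eq_smul htor m _ (appr_sub_dvd _ m)
    push_cast
    have h1 := appr_sub_dvd (ℓ := ℓ) a m
    have h2 := appr_sub_dvd (ℓ := ℓ) b m
    have : a + b - ((a.appr m : ℤ_[ℓ]) + (b.appr m : ℤ_[ℓ]))
        = (a - (a.appr m : ℤ_[ℓ])) + (b - (b.appr m : ℤ_[ℓ])) := by ring
    rw [this]
    exact dvd_add h1 h2
  zero_smul x := by
    have := pSmul_eq_zsmul_comp htor t (0 : ℤ_[ℓ]) 0 (by norm_num) x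
    simp only [zero_zsmul] at this; exact this

end

section
open Stmt10Aux Filter
variable {M : ℕ → Type*} [∀ m, AddCommGroup (M m)] {ℓ : ℕ} [Fact ℓ.Prime]
variable (htor : ∀ (m : ℕ) (x : M m), (ℓ ^ m) • x = 0) (t : ∀ m, M (m + 1) →+ M m)

lemma Stmt10Aux.pSmul_kill (c : ℤ_[ℓ]) (x : invLimit t) (m : ℕ)
    (h : ((ℓ : ℤ_[ℓ]) ^ m) ∣ c) : ((pSmul htor t c x : invLimit t) : ∀ n, M n) m = 0 := by
  rw [pSmul_coe, ← natCast_zsmul _ (c.appr m),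
    smul_eq_smul htor m _ (appr_sub_dvd c m) (v := 0) (by simpa using h), zero_zsmul]

lemma Stmt10Aux.pSmul_natCast (c : ℕ) (x : invLimit t) :
    pSmul htor t ((c : ℤ_[ℓ])) x = c • x := by
  rw [pSmul_eq_zsmul_comp htor t _ (c : ℤ) (by push_cast; ring), natCast_zsmul]

lemma Stmt10Aux.dvd_iff_norm {c : ℤ_[ℓ]} {n : ℕ} :
    ((ℓ : ℤ_[ℓ]) ^ n) ∣ c ↔ ‖c‖ ≤ (ℓ : ℝ) ^ (-n : ℤ) := by
  rw [PadicInt.norm_le_pow_iff_mem_span_pow, Ideal.mem_span_singleton]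

lemma Stmt10Aux.fin_module [∀ m, Finite (M m)] (N₁ : ℕ) (hN₁ : 1 ≤ N₁)
    (hsurj : Function.Surjective (fun x : invLimit t => (x : ∀ n, M n) N₁))
    (hdvd : ∀ x : invLimit t, (x : ∀ n, M n) N₁ = 0 → ∃ y : invLimit t, (ℓ ^ N₁) • y = x) :
    @Module.Finite ℤ_[ℓ] (invLimit t) _ _ (pModule htor t) := by
  classical
  letI inst : Module ℤ_[ℓ] (invLimit t) := pModule htor t
  letI : Fintype (M N₁) := Fintype.ofFinite _
  have hℓ1 : (1 : ℝ) < (ℓ : ℝ) := by exact_mod_cast (Fact.out : ℓ.Prime).one_lt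
  -- the generators
  have hg' : ∀ b : M N₁, ∃ x : invLimit t, (x : ∀ n, M n) N₁ = b := fun b => hsurj b
  choose g hg using hg'
  suffices hspan : ∀ y : invLimit t, y ∈ Submodule.span ℤ_[ℓ] (Set.range g) by
    refine ⟨⟨(Set.finite_range g).toFinset, ?_⟩⟩
    rw [Set.Finite.coe_toFinset]
    exact eq_top_iff.mpr (fun y _ => hspan y)
  intro y
  -- successive division
  have step : ∀ w : invLimit t, ∃ w' : invLimit t,
      (ℓ ^ N₁) • w' = w - g ((w : ∀ n, M n) N₁) := by
    intro w
    apply hdvd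
    have : ((w - g ((w : ∀ n, M n) N₁) : invLimit t) : ∀ n, M n) N₁
        = (w : ∀ n, M n) N₁ - ((g ((w : ∀ n, M n) N₁) : invLimit t) : ∀ n, M n) N₁ := rfl
    rw [this, hg, sub_self]
  let z : ℕ → invLimit t := fun n => Nat.rec y (fun _ zk => (step zk).choose) n
  let a : ℕ → M N₁ := fun k => (z k).val N₁
  have hz : ∀ k, (ℓ ^ N₁) • z (k + 1) = z k - g (a k) := by
    intro k
    exact (step (z k)).choose_spec
  -- partial sum identity
  have claim : ∀ n, y = (∑ k ∈ Finset.range n, ((ℓ : ℤ_[ℓ]) ^ (k * N₁)) • g (a k))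
      + ((ℓ : ℤ_[ℓ]) ^ (n * N₁)) • z n := by
    intro n
    induction n with
    | zero => simp [z]
    | succ n ih =>
        have hzn : z n = g (a n) + ((ℓ : ℤ_[ℓ]) ^ N₁) • z (n + 1) := by
          have := hz n
          rw [show ((ℓ : ℤ_[ℓ]) ^ N₁) • z (n + 1) = (ℓ ^ N₁ : ℕ) • z (n + 1) by
            rw [← pSmul_natCast htor t (ℓ ^ N₁) (z (n + 1))]; push_cast; rfl, this]
          abel
        rw [Finset.sum_range_succ, ih, hzn, smul_add, smul_smul, ← pow_add,
          show n * N₁ + N₁ = (n + 1) * N₁ by ring]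
        abel
  -- coefficients
  let F : ℕ → M N₁ → ℤ_[ℓ] :=
    fun n b => ∑ k ∈ Finset.range n, if a k = b then (ℓ : ℤ_[ℓ]) ^ (k * N₁) else 0
  have hreindex : ∀ n, (∑ k ∈ Finset.range n, ((ℓ : ℤ_[ℓ]) ^ (k * N₁)) • g (a k))
      = ∑ b : M N₁, F n b • g b := by
    intro n
    simp only [F, Finset.sum_smul, ite_smul, zero_smul]
    rw [Finset.sum_comm]
    refine Finset.sum_congr rfl (fun k _ => ?_)
    simp
  have hFd : ∀ b n n', n ≤ n' → ((ℓ : ℤ_[ℓ]) ^ n) ∣ F n' b - F n b := by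
    intro b n n' hnn
    rw [show F n' b - F n b
        = ∑ k ∈ Finset.Ico n n', if a k = b then (ℓ : ℤ_[ℓ]) ^ (k * N₁) else 0 by
      rw [Finset.sum_Ico_eq_sub _ hnn]]
    refine Finset.dvd_sum (fun k hk => ?_)
    have hk' : n ≤ k := (Finset.mem_Ico.mp hk).1
    split
    · exact pow_dvd_pow _ (le_trans hk' (Nat.le_mul_of_pos_right k (by omega)))
    · exact dvd_zero _
  have hcau : ∀ b, CauchySeq (fun n => F n b) := by
    intro b
    refine cauchySeq_of_le_tendsto_0 (fun n => (ℓ : ℝ) ^ (-n : ℤ)) ?_ ?_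
    · intro n m K hKn hKm
      rw [dist_eq_norm]
      rcases le_total n m with h | h
      · rw [← neg_sub, norm_neg]
        exact le_trans (dvd_iff_norm.mp (dvd_trans (pow_dvd_pow _ hKn) (hFd b n m h)))
          le_rfl
      · exact le_trans (dvd_iff_norm.mp (dvd_trans (pow_dvd_pow _ hKm) (hFd b m n h)))
          le_rfl
    · have : ∀ K : ℕ, (ℓ : ℝ) ^ (-K : ℤ) = ((ℓ : ℝ)⁻¹) ^ K := by
        intro K
        rw [zpow_neg, zpow_natCast, inv_pow]
      simp only [this]
      exact tendsto_pow_atTop_nhds_zero_of_lt_one (by positivity)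
        (inv_lt_one_of_one_lt₀ hℓ1)
  have hlim : ∀ b, ∃ c : ℤ_[ℓ], Tendsto (fun n => F n b) atTop (nhds c) :=
    fun b => cauchySeq_tendsto_of_complete (hcau b)
  choose c hc using hlim
  have hcb : ∀ b n, ((ℓ : ℤ_[ℓ]) ^ n) ∣ c b - F n b := by
    intro b n
    rw [dvd_iff_norm]
    have htt : Tendsto (fun n' => ‖F n' b - F n b‖) atTop (nhds ‖c b - F n b‖) :=
      ((hc b).sub tendsto_const_nhds).norm
    refine le_of_tendsto htt ?_
    filter_upwards [eventually_ge_atTop n] with n' hn'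
    exact dvd_iff_norm.mp (hFd b n n' hn')
  -- the limit element
  have hmem : (∑ b : M N₁, c b • g b) ∈ Submodule.span ℤ_[ℓ] (Set.range g) :=
    Submodule.sum_mem _ (fun b _ =>
      Submodule.smul_mem _ _ (Submodule.subset_span ⟨b, rfl⟩))
  have hfinal : y = ∑ b : M N₁, c b • g b := by
    have hdiff : ∀ m : ℕ, y - (∑ b : M N₁, c b • g b)
        = (∑ b : M N₁, (F m b - c b) • g b) + ((ℓ : ℤ_[ℓ]) ^ (m * N₁)) • z m := by
      intro m
      rw [show (∑ b : M N₁, (F m b - c b) • g b)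
          = (∑ b : M N₁, F m b • g b) - ∑ b : M N₁, c b • g b by
        rw [← Finset.sum_sub_distrib]
        exact Finset.sum_congr rfl (fun b _ => by rw [sub_smul])]
      rw [show y = (∑ b : M N₁, F m b • g b) + ((ℓ : ℤ_[ℓ]) ^ (m * N₁)) • z m by
        rw [← hreindex]; exact claim m]
      abel
    have hzero : ∀ m : ℕ, ((y - (∑ b : M N₁, c b • g b) : invLimit t) : ∀ n, M n) m = 0 := by
      intro m
      rw [hdiff m]
      have h1 : (((∑ b : M N₁, (F m b - c b) • g b : invLimit t)) : ∀ n, M n) m = 0 := by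
        rw [show ((∑ b : M N₁, (F m b - c b) • g b : invLimit t) : ∀ n, M n)
            = ∑ b : M N₁, (((F m b - c b) • g b : invLimit t) : ∀ n, M n) by
          exact map_sum (AddSubgroup.subtype _) _ _]
        rw [Finset.sum_apply]
        refine Finset.sum_eq_zero (fun b _ => ?_)
        exact pSmul_kill htor t _ _ m (by
          have := hcb b m
          rw [← dvd_neg] at this
          simpa using this)
      have h2 : ((((ℓ : ℤ_[ℓ]) ^ (m * N₁)) • z m : invLimit t) : ∀ n, M n) m = 0 :=
        pSmul_kill htor t _ _ m (pow_dvd_pow _ (Nat.le_mul_of_pos_right m (by omega)))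
      show (((∑ b : M N₁, (F m b - c b) • g b : invLimit t) : ∀ n, M n) m)
          + ((((ℓ : ℤ_[ℓ]) ^ (m * N₁)) • z m : invLimit t) : ∀ n, M n) m = 0
      rw [h1, h2, add_zero]
    have h0 : y - (∑ b : M N₁, c b • g b) = 0 := by
      ext m; exact hzero m
    rw [← sub_eq_zero]
    exact h0
  rw [hfinal]
  exact hmem

end


open Stmt10Aux in
/-- Let (M_m) be an inverse system of finite abelian groups with M_m killed by ℓ^m,
satisfying the Mittag-Leffler condition. If each transition map M_{m+1} → M_m induces an
isomorphism M_{m+1}/ℓ^m ≅ M_m for m large, then M = lim M_m is a finitely generated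
ℤ_ℓ-module and M/ℓ^m ≅ M_m (via the projection) for m large. -/
theorem stmt_10 (ℓ : ℕ) [Fact ℓ.Prime] (M : ℕ → Type*) [∀ m, AddCommGroup (M m)]
    [∀ m, Finite (M m)]
    (htor : ∀ (m : ℕ) (x : M m), (ℓ ^ m) • x = 0)
    (t : ∀ m, M (m + 1) →+ M m)
    (hML : ∀ m, ∃ K, ∀ k, K ≤ k → Set.range (chainMap t m k) = Set.range (chainMap t m K))
    (hiso : ∃ N, ∀ m, N ≤ m →
      Function.Surjective (t m) ∧
      ∀ x : M (m + 1), t m x = 0 ↔ ∃ y : M (m + 1), (ℓ ^ m) • y = x) :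
    ∃ inst : Module ℤ_[ℓ] (invLimit t),
      (@IsFinZlModule ℓ _ (invLimit t) _ inst) ∧
      ∃ N, ∀ m, N ≤ m →
        Function.Surjective (fun x : invLimit t => (x : ∀ n, M n) m) ∧
        ∀ x : invLimit t, (x : ∀ n, M n) m = 0 ↔ ∃ y : invLimit t, (ℓ ^ m) • y = x := by
  obtain ⟨N, hiso'⟩ := hiso
  have hsurj : ∀ m, N ≤ m → Function.Surjective (fun x : invLimit t => (x : ∀ n, M n) m) :=
    fun m hm => proj_surj t m (fun i hi => (hiso' i (le_trans hm hi)).1)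
  have hdvd : ∀ m, N ≤ m → ∀ x : invLimit t, (x : ∀ n, M n) m = 0 →
      ∃ y : invLimit t, (ℓ ^ m) • y = x :=
    fun m hm x hx => dvd_of_proj_zero htor t N hiso' m hm x hx
  refine ⟨pModule htor t, ⟨?_, ?_⟩, N, fun m hm => ⟨hsurj m hm, fun x => ⟨hdvd m hm x, ?_⟩⟩⟩
  · intro n x
    exact pSmul_eq_zsmul_comp htor t _ n rfl x
  · exact fin_module htor t (N + 1) (by omega)
      (hsurj (N + 1) (by omega)) (hdvd (N + 1) (by omega) )
  · rintro ⟨y, rfl⟩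
    have : (((ℓ ^ m) • y : invLimit t) : ∀ n, M n) m = (ℓ ^ m) • ((y : ∀ n, M n) m) := by
      rw [show (((ℓ ^ m) • y : invLimit t) : ∀ n, M n)
          = (ℓ ^ m) • ((y : ∀ n, M n)) from map_nsmul (AddSubgroup.subtype _) _ _]
      rfl
    rw [this, htor]
end
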